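/- If C is a clopen subset of M*, then there is a clopen subset B of ℕ* such that C = (π*)⁻¹[B]. Consequently the clopen subsets of M* are exactly the preimages under π* of clopen subsets of ℕ*. -/

import Mathlib

open scoped unitInterval
open Set

noncomputable section

abbrev Mspace : Type := ℕ × I

def betaPi : StoneCech Mspace → Ultrafilter ℕ :=
  stoneCechExtend (continuous_of_discreteTopology.comp continuous_fst :
    Continuous fun p : Mspace => (pure p.1 : Ultrafilter ℕ))

def Mstar : Set (StoneCech Mspace) := (Set.range (stoneCechUnit : Mspace → StoneCech Mspace))ᶜ

def Nstar : Set (Ultrafilter ℕ) := (Set.range (pure : ℕ → Ultrafilter ℕ))ᶜ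

lemma betaPi_unit (m : Mspace) : betaPi (stoneCechUnit m) = pure m.1 :=
  congrFun (stoneCechExtend_extends _) m

lemma continuous_betaPi : Continuous betaPi := continuous_stoneCechExtend _

/-- slab -/
def slab (S : Set ℕ) : Set (StoneCech Mspace) :=
  closure (stoneCechUnit '' {m : Mspace | m.1 ∈ S})

lemma slab_subset (S : Set ℕ) : slab S ⊆ betaPi ⁻¹' {u | S ∈ u} := by
  have h1 : stoneCechUnit '' {m : Mspace | m.1 ∈ S} ⊆ betaPi ⁻¹' {u | S ∈ u} := by
    rintro _ ⟨m, hm, rfl⟩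
    simp only [mem_preimage, betaPi_unit, mem_setOf_eq, Ultrafilter.mem_pure]
    exact hm
  exact closure_minimal h1 ((ultrafilter_isClosed_basic S).preimage continuous_betaPi)

lemma slab_union (S : Set ℕ) : slab S ∪ slab Sᶜ = univ := by
  have h0 : {m : Mspace | m.1 ∈ S} ∪ {m : Mspace | m.1 ∈ Sᶜ} = univ := by
    ext m; by_cases h : m.1 ∈ S <;> simp [h]
  rw [slab, slab, ← closure_union, ← image_union, h0, image_univ]
  exact (denseRange_stoneCechUnit).closure_range

lemma slab_eq (S : Set ℕ) : slab S = betaPi ⁻¹' {u | S ∈ u} := by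
  apply Subset.antisymm (slab_subset S)
  intro p hp
  rcases (slab_union S).symm ▸ mem_univ p with h | h
  · exact h
  · exact absurd ((slab_subset Sᶜ) h) (by simpa using (betaPi p).compl_notMem hp)

lemma compact_fiberset (n : ℕ) : IsCompact {m : Mspace | m.1 = n} := by
  have : {m : Mspace | m.1 = n} = (fun t : I => ((n, t) : Mspace)) '' univ := by
    ext m
    constructor
    · rintro h; exact ⟨m.2, mem_univ _, by simp [Prod.ext_iff, h.symm]⟩
    · rintro ⟨t, -, rfl⟩; rfl
  rw [this]
  exact isCompact_univ.image (by continuity)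

lemma connected_piece (n : ℕ) :
    IsPreconnected (stoneCechUnit '' {m : Mspace | m.1 = n}) := by
  have : {m : Mspace | m.1 = n} = (fun t : I => ((n, t) : Mspace)) '' univ := by
    ext m
    constructor
    · rintro h; exact ⟨m.2, mem_univ _, by simp [Prod.ext_iff, h.symm]⟩
    · rintro ⟨t, -, rfl⟩; rfl
  rw [this, ← image_comp]
  exact isPreconnected_univ.image _ (continuous_stoneCechUnit.comp (by continuity)).continuousOn

lemma slab_singleton (n : ℕ) :
    slab {n} = stoneCechUnit '' {m : Mspace | m.1 = n} := by
  have hc : IsCompact (stoneCechUnit '' {m : Mspace | m.1 = n}) :=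
    (compact_fiberset n).image continuous_stoneCechUnit
  have : {m : Mspace | m.1 ∈ ({n} : Set ℕ)} = {m : Mspace | m.1 = n} := rfl
  rw [slab, this, hc.isClosed.closure_eq]

lemma piece_eq (n : ℕ) :
    stoneCechUnit '' {m : Mspace | m.1 = n} = betaPi ⁻¹' {u | ({n} : Set ℕ) ∈ u} := by
  rw [← slab_singleton, slab_eq]

lemma isOpen_range_unit : IsOpen (Set.range (stoneCechUnit : Mspace → StoneCech Mspace)) := by
  have : Set.range (stoneCechUnit : Mspace → StoneCech Mspace)
      = ⋃ n : ℕ, stoneCechUnit '' {m : Mspace | m.1 = n} := by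
    ext p
    simp only [mem_range, mem_iUnion, mem_image, mem_setOf_eq]
    constructor
    · rintro ⟨m, rfl⟩; exact ⟨m.1, m, rfl, rfl⟩
    · rintro ⟨n, m, -, rfl⟩; exact ⟨m, rfl⟩
  rw [this]
  exact isOpen_iUnion fun n => (piece_eq n) ▸
    ((ultrafilter_isOpen_basic _).preimage continuous_betaPi)

lemma isClosed_Mstar : IsClosed Mstar := isOpen_range_unit.isClosed_compl

lemma betaPi_mem_Nstar {p : StoneCech Mspace} (hp : p ∈ Mstar) : betaPi p ∈ Nstar := by
  rintro ⟨n, hn⟩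
  apply hp
  have : p ∈ betaPi ⁻¹' {u | ({n} : Set ℕ) ∈ u} := by
    simp only [mem_preimage, mem_setOf_eq, ← hn, Ultrafilter.mem_pure, mem_singleton_iff]
  rw [← piece_eq] at this
  exact image_subset_range _ _ this

lemma reverse_dir (B : Set (Ultrafilter ℕ)) (_hBN : B ⊆ Nstar)
    (hB : IsClopen ((↑·) ⁻¹' B : Set ↥Nstar)) :
    IsClopen ((↑·) ⁻¹' {p | p ∈ Mstar ∧ betaPi p ∈ B} : Set ↥Mstar) := by
  obtain ⟨U, hU, hUB⟩ := isOpen_induced_iff.1 hB.2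
  obtain ⟨F, hF, hFB⟩ := isClosed_induced_iff.1 hB.1
  have key : ∀ (W : Set (Ultrafilter ℕ)),
      (Subtype.val ⁻¹' W : Set ↥Nstar) = Subtype.val ⁻¹' B →
      ((↑·) ⁻¹' {p | p ∈ Mstar ∧ betaPi p ∈ B} : Set ↥Mstar)
        = (fun q : ↥Mstar => betaPi (q : StoneCech Mspace)) ⁻¹' W := by
    intro W hW
    ext q
    have hq : betaPi (q : StoneCech Mspace) ∈ Nstar := betaPi_mem_Nstar q.2
    have := Set.ext_iff.1 hW (⟨betaPi (q : StoneCech Mspace), hq⟩ : ↥Nstar)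
    simp only [mem_preimage, mem_setOf_eq, q.2, true_and]
    exact this.symm
  constructor
  · rw [key F hFB]
    exact hF.preimage (continuous_betaPi.comp continuous_subtype_val)
  · rw [key U hUB]
    exact hU.preimage (continuous_betaPi.comp continuous_subtype_val)

lemma trace_closed {s : Set (StoneCech Mspace)} (hs : s ⊆ Mstar)
    (h : IsClosed (Subtype.val ⁻¹' s : Set ↥Mstar)) : IsClosed s := by
  obtain ⟨F, hF, hFs⟩ := isClosed_induced_iff.1 h
  have : s = F ∩ Mstar := by
    ext p
    constructor
    · intro hp
      have hpM := hs hp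
      have := Set.ext_iff.1 hFs (⟨p, hpM⟩ : ↥Mstar)
      exact ⟨this.2 hp, hpM⟩
    · rintro ⟨hpF, hpM⟩
      exact (Set.ext_iff.1 hFs (⟨p, hpM⟩ : ↥Mstar)).1 hpF
  rw [this]
  exact hF.inter isClosed_Mstar

lemma forward_dir (C : Set (StoneCech Mspace)) (hCM : C ⊆ Mstar)
    (hC : IsClopen ((↑·) ⁻¹' C : Set ↥Mstar)) :
    ∃ B : Set (Ultrafilter ℕ), B ⊆ Nstar ∧ IsClopen ((↑·) ⁻¹' B : Set ↥Nstar) ∧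
      C = {p | p ∈ Mstar ∧ betaPi p ∈ B} := by
  set D : Set (StoneCech Mspace) := Mstar \ C with hD
  have hDM : D ⊆ Mstar := diff_subset
  have hCclosed : IsClosed C := trace_closed hCM hC.1
  have hDclosed : IsClosed D := by
    apply trace_closed hDM
    have : (Subtype.val ⁻¹' D : Set ↥Mstar) = (Subtype.val ⁻¹' C)ᶜ := by
      ext q; simp [hD, q.2]
    rw [this]
    exact hC.2.isClosed_compl
  have hsep : SeparatedNhds C D :=
    SeparatedNhds.of_isCompact_isCompact hCclosed.isCompact hDclosed.isCompact
      (disjoint_sdiff_right.mono_left le_rfl)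
  obtain ⟨U, V, hUo, hVo, hCU, hDV, hUV⟩ := hsep
  -- the leftover compact set
  set K : Set (StoneCech Mspace) := (U ∪ V)ᶜ with hK
  have hKrange : K ⊆ ⋃ n : ℕ, stoneCechUnit '' {m : Mspace | m.1 = n} := by
    intro p hp
    have hpM : p ∉ Mstar := by
      intro hpMstar
      rcases (em (p ∈ C)) with h | h
      · exact hp (Or.inl (hCU h))
      · exact hp (Or.inr (hDV ⟨hpMstar, h⟩))
    simp only [Mstar, mem_compl_iff, not_not] at hpM
    obtain ⟨m, rfl⟩ := hpM
    exact mem_iUnion.2 ⟨m.1, m, rfl, rfl⟩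
  have hKcomp : IsCompact K := (hUo.union hVo).isClosed_compl.isCompact
  obtain ⟨F, hF⟩ := hKcomp.elim_finite_subcover
    (fun n : ℕ => stoneCechUnit '' {m : Mspace | m.1 = n})
    (fun n => by
      show IsOpen (stoneCechUnit '' {m : Mspace | m.1 = n})
      rw [piece_eq]
      exact (ultrafilter_isOpen_basic _).preimage continuous_betaPi)
    hKrange
  -- pieces outside F avoid K
  have hpieceUV : ∀ n : ℕ, n ∉ F → stoneCechUnit '' {m : Mspace | m.1 = n} ⊆ U ∪ V := by
    intro n hn p hp
    by_contra hpUV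
    have hpK : p ∈ K := hpUV
    obtain ⟨f, hfF, hpf⟩ := by
      have := hF hpK
      simpa only [mem_iUnion, exists_prop] using this
    have h1 : p ∈ betaPi ⁻¹' {u | ({n} : Set ℕ) ∈ u} := (piece_eq n) ▸ hp
    have h2 : p ∈ betaPi ⁻¹' {u | ({f} : Set ℕ) ∈ u} := (piece_eq f) ▸ hpf
    have hnf : n ≠ f := fun h => hn (h ▸ hfF)
    have : ({n} : Set ℕ) ∩ {f} ∈ betaPi p := Filter.inter_mem h1 h2
    have hemp : ({n} : Set ℕ) ∩ {f} = ∅ := by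
      ext x; simp only [mem_inter_iff, mem_singleton_iff, mem_empty_iff_false, iff_false]
      rintro ⟨rfl, rfl⟩; exact hnf rfl
    rw [hemp] at this
    exact Filter.empty_notMem (betaPi p : Filter ℕ) this
  -- the dichotomy
  have hdich : ∀ n : ℕ, n ∉ F →
      stoneCechUnit '' {m : Mspace | m.1 = n} ⊆ U ∨
      stoneCechUnit '' {m : Mspace | m.1 = n} ⊆ V :=
    fun n hn => (connected_piece n).subset_or_subset hUo hVo hUV (hpieceUV n hn)
  set B₀ : Set ℕ := {n | n ∉ F ∧ stoneCechUnit '' {m : Mspace | m.1 = n} ⊆ U} with hB₀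
  -- slab B₀ inside closure U
  have hslabU : slab B₀ ⊆ closure U := by
    apply closure_mono
    rintro _ ⟨m, hm, rfl⟩
    exact hm.2 ⟨m, rfl, rfl⟩
  -- slab B₀ᶜ minus range is inside closure V
  have hslabV : ∀ p ∈ Mstar, p ∈ slab B₀ᶜ → p ∈ closure V := by
    intro p hpM hp
    have hsub : {m : Mspace | m.1 ∈ B₀ᶜ} ⊆
        {m : Mspace | m.1 ∈ (F : Set ℕ)} ∪ {m : Mspace | m.1 ∈ {n | n ∉ F ∧
          stoneCechUnit '' {m : Mspace | m.1 = n} ⊆ V}} := by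
      intro m hm
      by_cases hmF : m.1 ∈ F
      · exact Or.inl hmF
      · rcases hdich m.1 hmF with h | h
        · exact absurd ⟨hmF, h⟩ hm
        · exact Or.inr ⟨hmF, h⟩
    have := calc slab B₀ᶜ
        ⊆ closure (stoneCechUnit '' ({m : Mspace | m.1 ∈ (F : Set ℕ)} ∪
            {m : Mspace | m.1 ∈ {n | n ∉ F ∧
              stoneCechUnit '' {m : Mspace | m.1 = n} ⊆ V}})) :=
          closure_mono (image_mono hsub)
      _ = closure (stoneCechUnit '' {m : Mspace | m.1 ∈ (F : Set ℕ)}) ∪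
            closure (stoneCechUnit '' {m : Mspace | m.1 ∈ {n | n ∉ F ∧
              stoneCechUnit '' {m : Mspace | m.1 = n} ⊆ V}}) := by
          rw [image_union, closure_union]
    rcases this hp with h | h
    · -- compact part, inside range, contradiction with p ∈ Mstar
      exfalso
      have hcomp : IsCompact (stoneCechUnit '' {m : Mspace | m.1 ∈ (F : Set ℕ)}) := by
        have : {m : Mspace | m.1 ∈ (F : Set ℕ)} = ⋃ f ∈ F, {m : Mspace | m.1 = f} := by
          ext m; simp
        rw [this, image_iUnion₂]
        exact F.isCompact_biUnion fun f _ => (compact_fiberset f).image continuous_stoneCechUnit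
      rw [hcomp.isClosed.closure_eq] at h
      exact hpM (image_subset_range _ _ h)
    · refine closure_mono ?_ h
      rintro _ ⟨m, hm, rfl⟩
      exact hm.2 ⟨m, rfl, rfl⟩
  -- the key claim
  have hkey : ∀ p ∈ Mstar, (p ∈ C ↔ B₀ ∈ betaPi p) := by
    intro p hpM
    constructor
    · intro hpC
      by_contra hB
      have : B₀ᶜ ∈ betaPi p := Ultrafilter.compl_mem_iff_notMem.2 hB
      have hpV : p ∈ closure V := hslabV p hpM ((slab_eq B₀ᶜ) ▸ this)
      have : closure V ⊆ Uᶜ := closure_minimal (hUV.subset_compl_left) hUo.isClosed_compl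
      exact this hpV (hCU hpC)
    · intro hB
      by_contra hpC
      have hpV : p ∈ V := hDV ⟨hpM, hpC⟩
      have hpU : p ∈ closure U := hslabU ((slab_eq B₀) ▸ (by exact hB))
      have : closure U ⊆ Vᶜ := closure_minimal (hUV.subset_compl_right) hVo.isClosed_compl
      exact this hpU hpV
  refine ⟨{u | u ∈ Nstar ∧ B₀ ∈ u}, fun u hu => hu.1, ?_, ?_⟩
  · have : ((↑·) ⁻¹' {u | u ∈ Nstar ∧ B₀ ∈ u} : Set ↥Nstar)
        = Subtype.val ⁻¹' {u : Ultrafilter ℕ | B₀ ∈ u} := by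
      ext q; simp [q.2]
    rw [this]
    exact IsClopen.preimage ⟨ultrafilter_isClosed_basic _, ultrafilter_isOpen_basic _⟩
      continuous_subtype_val
  · ext p
    simp only [mem_setOf_eq]
    constructor
    · intro hp
      exact ⟨hCM hp, betaPi_mem_Nstar (hCM hp), (hkey p (hCM hp)).1 hp⟩
    · rintro ⟨hpM, -, hB⟩
      exact (hkey p hpM).2 hB

/-- The clopen subsets of `M*` are exactly the preimages under `π*` of clopen subsets
of `ℕ*`: every clopen subset `C` of the subspace `M*` is of the form `(π*)⁻¹[B]` for a
clopen subset `B` of `ℕ*`, and conversely every such preimage is clopen. -/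
theorem clopen_Mstar_iff :
    (∀ C : Set (StoneCech Mspace), C ⊆ Mstar →
      IsClopen ((↑·) ⁻¹' C : Set ↥Mstar) →
      ∃ B : Set (Ultrafilter ℕ), B ⊆ Nstar ∧ IsClopen ((↑·) ⁻¹' B : Set ↥Nstar) ∧
        C = {p | p ∈ Mstar ∧ betaPi p ∈ B}) ∧
    (∀ B : Set (Ultrafilter ℕ), B ⊆ Nstar → IsClopen ((↑·) ⁻¹' B : Set ↥Nstar) →
      IsClopen ((↑·) ⁻¹' {p | p ∈ Mstar ∧ betaPi p ∈ B} : Set ↥Mstar)) :=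
  ⟨forward_dir, reverse_dir⟩
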